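/- Let W be a cofinite isotropic subspace of Ĥ and L a lagrangian with dim(L ∩ W) = k < ∞ and L + W closed. Then dim(L ∩ W^ω) = k + (1/2)dim H_W, and L ∩ W^ω decomposes orthogonally as (L ∩ W) ⊕ (L ∩ (V⊥ ⊕ H_W)), where V = L ∩ W and V⊥ is the orthogonal complement of V in W. -/

import Mathlib

noncomputable section

set_option linter.unusedSectionVars false
set_option maxHeartbeats 1000000
set_option synthInstance.maxHeartbeats 400000

variable (H : Type) [NormedAddCommGroup H] [InnerProductSpace ℂ H] [CompleteSpace H]

/-- `Ĥ = H ⊕ H` with the Hilbert (l²) structure. -/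
abbrev Hh := WithLp 2 (H × H)

/-- The complex structure `J(x,y) = (y, -x)` on `Ĥ = H ⊕ H`. -/
def hatJ : Hh H →L[ℂ] Hh H :=
  (WithLp.prodContinuousLinearEquiv 2 ℂ H H).symm.toContinuousLinearMap ∘L
    ((ContinuousLinearMap.snd ℂ H H).prod (-(ContinuousLinearMap.fst ℂ H H))) ∘L
    (WithLp.prodContinuousLinearEquiv 2 ℂ H H).toContinuousLinearMap

/-- A subspace `L ⊆ Ĥ` is lagrangian if `JL = L⊥`. -/
def IsLagrangian (L : Submodule ℂ (Hh H)) : Prop :=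
  L.map (hatJ H).toLinearMap = Lᗮ

/-- The annihilator `W^ω = (JW)⊥` of an isotropic subspace `W`. -/
def annihilator (W : Submodule ℂ (Hh H)) : Submodule ℂ (Hh H) :=
  (W.map (hatJ H).toLinearMap)ᗮ

/-- The symplectically reduced space `H_W = (W ⊕ JW)⊥`. -/
def reducedSpace (W : Submodule ℂ (Hh H)) : Submodule ℂ (Hh H) :=
  (W ⊔ W.map (hatJ H).toLinearMap)ᗮ

lemma hatJ_inner (x y : Hh H) : inner (𝕜 := ℂ) (hatJ H x) y = -inner ℂ x (hatJ H y) := by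
  have h1 : (hatJ H x).ofLp.fst = x.ofLp.snd := rfl
  have h2 : (hatJ H x).ofLp.snd = -x.ofLp.fst := rfl
  have h3 : (hatJ H y).ofLp.fst = y.ofLp.snd := rfl
  have h4 : (hatJ H y).ofLp.snd = -y.ofLp.fst := rfl
  rw [WithLp.prod_inner_apply, WithLp.prod_inner_apply, h1, h2, h3, h4,
    inner_neg_left, inner_neg_right]
  ring

lemma hatJ_hatJ (x : Hh H) : hatJ H (hatJ H x) = -x := by
  have h1 : (hatJ H (hatJ H x)).ofLp.fst = -x.ofLp.fst := rfl
  have h2 : (hatJ H (hatJ H x)).ofLp.snd = -x.ofLp.snd := rfl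
  exact (WithLp.equiv 2 (H × H)).injective (Prod.ext h1 h2)

lemma hatJ_inner_hatJ (x y : Hh H) : inner (𝕜 := ℂ) (hatJ H x) (hatJ H y) = inner ℂ x y := by
  rw [hatJ_inner, hatJ_hatJ, inner_neg_right, neg_neg]

lemma hatJ_injective : Function.Injective (hatJ H) := by
  intro a b hab
  have := congrArg (hatJ H) hab
  rw [hatJ_hatJ, hatJ_hatJ] at this
  exact neg_injective this

lemma mem_map_hatJ {S : Submodule ℂ (Hh H)} {y : Hh H} :
    y ∈ S.map (hatJ H).toLinearMap ↔ -(hatJ H y) ∈ S := by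
  constructor
  · rintro ⟨x, hx, rfl⟩
    have : -(hatJ H (hatJ H x)) = x := by rw [hatJ_hatJ, neg_neg]
    simpa [this] using hx
  · intro h
    exact ⟨-(hatJ H y), h, by
      simp only [ContinuousLinearMap.coe_coe, map_neg, hatJ_hatJ, neg_neg]⟩

lemma map_hatJ_map_hatJ (S : Submodule ℂ (Hh H)) :
    (S.map (hatJ H).toLinearMap).map (hatJ H).toLinearMap = S := by
  ext y
  rw [mem_map_hatJ, mem_map_hatJ]
  simp only [map_neg, ContinuousLinearMap.coe_coe, hatJ_hatJ, neg_neg]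
  exact S.neg_mem_iff

lemma map_hatJ_orthogonal (S : Submodule ℂ (Hh H)) :
    (S.map (hatJ H).toLinearMap)ᗮ = Sᗮ.map (hatJ H).toLinearMap := by
  ext y
  rw [mem_map_hatJ, Submodule.mem_orthogonal, Submodule.mem_orthogonal']
  constructor
  · intro hy u hu
    have h1 : inner (𝕜 := ℂ) (hatJ H u) y = 0 := hy _ ⟨u, hu, rfl⟩
    rw [hatJ_inner, neg_eq_zero] at h1
    rw [inner_neg_left, neg_eq_zero, inner_eq_zero_symm]
    exact h1
  · rintro hy u ⟨x, hx, rfl⟩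
    have h1 := hy x hx
    rw [inner_neg_left, neg_eq_zero, inner_eq_zero_symm] at h1
    show inner (𝕜 := ℂ) (hatJ H x) y = 0
    rw [hatJ_inner, h1, neg_zero]

/-- let `W` be a cofinite isotropic subspace and `L` a lagrangian with
`dim (L ∩ W) = k < ∞` and `L + W` closed. Then
`dim (L ∩ W^ω) = k + (1/2) dim H_W` (stated doubled to avoid division), and `L ∩ W^ω`
decomposes orthogonally as `(L ∩ W) ⊕ (L ∩ (V⊥ ⊕ H_W))`, where `V = L ∩ W` and `V⊥` is
the orthogonal complement of `V` in `W`. -/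
theorem dim_inter_annihilator (W : Submodule ℂ (Hh H))
    (hisoc : IsClosed (W : Set (Hh H)))
    (hiso : W.map (hatJ H).toLinearMap ≤ Wᗮ)
    [FiniteDimensional ℂ ↥(reducedSpace H W)]
    (L : Submodule ℂ (Hh H)) (hL : IsLagrangian H L)
    (k : ℕ) [FiniteDimensional ℂ ↥(L ⊓ W)]
    (hk : Module.finrank ℂ ↥(L ⊓ W) = k)
    (hclosed : IsClosed ((L ⊔ W : Submodule ℂ (Hh H)) : Set (Hh H))) :
    FiniteDimensional ℂ ↥(L ⊓ annihilator H W) ∧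
    2 * Module.finrank ℂ ↥(L ⊓ annihilator H W) =
      2 * k + Module.finrank ℂ ↥(reducedSpace H W) ∧
    L ⊓ annihilator H W =
      (L ⊓ W) ⊔ (L ⊓ ((W ⊓ (L ⊓ W)ᗮ) ⊔ reducedSpace H W)) ∧
    (L ⊓ ((W ⊓ (L ⊓ W)ᗮ) ⊔ reducedSpace H W)) ≤ (L ⊓ W)ᗮ := by
  classical
  set JW := W.map (hatJ H).toLinearMap with hJWdef
  set HW := reducedSpace H W with hHWdef
  set Wω := annihilator H W with hWωdef
  set V := L ⊓ W with hVdef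
  have hann : Wω = JWᗮ := rfl
  have hred : HW = (W ⊔ JW)ᗮ := rfl
  haveI : CompleteSpace ↥W := hisoc.completeSpace_coe
  haveI : CompleteSpace ↥HW := FiniteDimensional.complete ℂ ↥HW
  haveI : CompleteSpace ↥V := FiniteDimensional.complete ℂ ↥V
  -- basic inclusions
  have hW_le_Wω : W ≤ Wω := by
    rw [hann]
    exact (Submodule.isOrtho_comm.mp hiso : _)
  have hHW_le_Wω : HW ≤ Wω := by
    rw [hann, hred]; exact Submodule.orthogonal_le le_sup_right
  have hHW_le_Wo : HW ≤ Wᗮ := by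
    rw [hred]; exact Submodule.orthogonal_le le_sup_left
  -- W^ω = W ⊔ H_W
  have hWω_eq : W ⊔ HW = Wω := by
    have h1 := Submodule.sup_orthogonal_inf_of_hasOrthogonalProjection hW_le_Wω
    rw [hred, hann, ← Submodule.inf_orthogonal]
    rw [hann] at h1
    exact h1
  -- projection onto H_W
  set P := HW.orthogonalProjectionOnto with hPdef
  have hPW : ∀ w ∈ W, P w = 0 := by
    intro w hw
    apply Submodule.orthogonalProjectionOnto_apply_of_mem_orthogonal
    rw [hred]
    exact Submodule.le_orthogonal_orthogonal _ (le_sup_left (b := JW) hw)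
  have hPJW : ∀ u ∈ JW, P u = 0 := by
    intro u hu
    apply Submodule.orthogonalProjectionOnto_apply_of_mem_orthogonal
    rw [hred]
    exact Submodule.le_orthogonal_orthogonal _ (le_sup_right (a := W) hu)
  have hPH : ∀ h ∈ HW, (P h : Hh H) = h := fun h hh =>
    HW.starProjection_eq_self_iff.mpr hh
  have hsub : ∀ x ∈ Wω, x - (P x : Hh H) ∈ W := by
    intro x hx
    rw [← hWω_eq] at hx
    obtain ⟨w, hw, h, hh, rfl⟩ := Submodule.mem_sup.mp hx
    have : (P (w + h) : Hh H) = h := by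
      rw [map_add, hPW w hw, Submodule.coe_add, Submodule.coe_zero, zero_add, hPH h hh]
    rw [this]
    simpa using hw
  -- the projected image L'
  set f : ↥(L ⊓ Wω) →ₗ[ℂ] ↥HW := P.toLinearMap ∘ₗ (L ⊓ Wω).subtype with hfdef
  have hf : ∀ x : ↥(L ⊓ Wω), f x = P (x : Hh H) := fun x => rfl
  set L' : Submodule ℂ (Hh H) := (LinearMap.range f).map HW.subtype with hL'def
  have hL'mem : ∀ y : Hh H, y ∈ L' ↔ ∃ x ∈ L ⊓ Wω, (P x : Hh H) = y := by
    intro y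
    constructor
    · rintro ⟨z, ⟨x, rfl⟩, rfl⟩
      exact ⟨(x : Hh H), x.2, rfl⟩
    · rintro ⟨x, hx, rfl⟩
      exact ⟨f ⟨x, hx⟩, ⟨⟨x, hx⟩, rfl⟩, rfl⟩
  have hL'le : L' ≤ HW := Submodule.map_subtype_le _ _
  -- isotropy of L'
  have hIso : ∀ a ∈ L', ∀ b ∈ L', inner (𝕜 := ℂ) (hatJ H a) b = 0 := by
    intro a ha b hb
    obtain ⟨x, hx, hxa⟩ := (hL'mem a).mp ha
    obtain ⟨y, hy, hyb⟩ := (hL'mem b).mp hb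
    have hw1 : x - a ∈ W := by rw [← hxa]; exact hsub x hx.2
    have hw2 : y - b ∈ W := by rw [← hyb]; exact hsub y hy.2
    have expand : inner (𝕜 := ℂ) (hatJ H a) b =
        inner (𝕜 := ℂ) (hatJ H x) y - inner (𝕜 := ℂ) (hatJ H x) (y - b)
          - inner (𝕜 := ℂ) (hatJ H (x - a)) y + inner (𝕜 := ℂ) (hatJ H (x - a)) (y - b) := by
      have e1 : hatJ H a = hatJ H x - hatJ H (x - a) := by
        rw [← map_sub]; congr 1; abel
      have step : inner (𝕜 := ℂ) (hatJ H a) b =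
          inner (𝕜 := ℂ) (hatJ H x - hatJ H (x - a)) (y - (y - b)) := by
        rw [← e1]
        congr 1
        abel
      rw [step]
      simp only [inner_sub_left, inner_sub_right]
      ring
    have t1 : inner (𝕜 := ℂ) (hatJ H x) y = 0 := by
      have hJx : hatJ H x ∈ Lᗮ := by
        rw [← hL]; exact ⟨x, hx.1, rfl⟩
      exact (Submodule.mem_orthogonal' _ _).mp hJx y hy.1
    have t2 : inner (𝕜 := ℂ) (hatJ H x) (y - b) = 0 := by
      rw [hatJ_inner]
      have : inner (𝕜 := ℂ) x (hatJ H (y - b)) = 0 := by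
        have hx2 : x ∈ JWᗮ := by rw [← hann]; exact hx.2
        exact (Submodule.mem_orthogonal' _ _).mp hx2 _ ⟨y - b, hw2, rfl⟩
      rw [this, neg_zero]
    have t3 : inner (𝕜 := ℂ) (hatJ H (x - a)) y = 0 := by
      have hy2 : y ∈ JWᗮ := by rw [← hann]; exact hy.2
      exact (Submodule.mem_orthogonal _ _).mp hy2 _ ⟨x - a, hw1, rfl⟩
    have t4 : inner (𝕜 := ℂ) (hatJ H (x - a)) (y - b) = 0 := by
      have : hatJ H (x - a) ∈ Wᗮ := hiso ⟨x - a, hw1, rfl⟩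
      exact (Submodule.mem_orthogonal' _ _).mp this _ hw2
    rw [expand, t1, t2, t3, t4]
    ring
  set JL' := L'.map (hatJ H).toLinearMap with hJL'def
  have hHWJ : HW.map (hatJ H).toLinearMap = HW := by
    rw [hred, ← map_hatJ_orthogonal, Submodule.map_sup, hJWdef, map_hatJ_map_hatJ,
      sup_comm]
  have hJL'leHW : JL' ≤ HW := by
    rw [hJL'def, ← hHWJ]
    exact Submodule.map_mono hL'le
  have hJL'orth : JL' ≤ L'ᗮ := by
    rintro u ⟨a, ha, rfl⟩
    rw [Submodule.mem_orthogonal']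
    intro v hv
    exact hIso a ha v hv
  have hL'leJL'o : L' ≤ JL'ᗮ := by
    intro b hb
    rw [Submodule.mem_orthogonal]
    rintro u ⟨a, ha, rfl⟩
    exact hIso a ha b hb
  -- the key coisotropy property
  have hkey : HW ⊓ JL'ᗮ ≤ L' := by
    rintro h ⟨hhHW, hhJo⟩
    -- J h is orthogonal to L ⊓ W^ω
    have step1 : hatJ H h ∈ (L ⊓ Wω)ᗮ := by
      rw [Submodule.mem_orthogonal']
      intro x hx
      have hw : x - (P x : Hh H) ∈ W := hsub x hx.2
      have hb : (P x : Hh H) ∈ L' := (hL'mem _).mpr ⟨x, hx, rfl⟩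
      have hx' : x = (x - (P x : Hh H)) + (P x : Hh H) := by abel
      rw [hx', inner_add_right]
      have u1 : inner (𝕜 := ℂ) (hatJ H h) (x - (P x : Hh H)) = 0 := by
        rw [hatJ_inner]
        have : inner (𝕜 := ℂ) h (hatJ H (x - (P x : Hh H))) = 0 := by
          have hmem : hatJ H (x - (P x : Hh H)) ∈ W ⊔ JW :=
            le_sup_right (a := W) (⟨_, hw, rfl⟩ : hatJ H (x - (P x : Hh H)) ∈ JW)
          have := hred ▸ hhHW
          exact (Submodule.mem_orthogonal' _ _).mp this _ hmem
        rw [this, neg_zero]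
      have u2 : inner (𝕜 := ℂ) (hatJ H h) (P x : Hh H) = 0 := by
        rw [hatJ_inner]
        have : inner (𝕜 := ℂ) h (hatJ H (P x : Hh H)) = 0 :=
          (Submodule.mem_orthogonal' _ _).mp hhJo _ ⟨_, hb, rfl⟩
        rw [this, neg_zero]
      rw [u1, u2, add_zero]
    -- identify (L ⊓ W^ω)ᗮ with J(L ⊔ W)
    have hLc : Lᗮᗮ = L := by
      rw [← hL, map_hatJ_orthogonal, ← hL, map_hatJ_map_hatJ]
    have hLo : (L.map (hatJ H).toLinearMap)ᗮ = L := by rw [hL, hLc]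
    have hinter : L ⊓ Wω = ((L ⊔ W)ᗮ).map (hatJ H).toLinearMap :=
      calc L ⊓ Wω = (L.map (hatJ H).toLinearMap)ᗮ ⊓ (W.map (hatJ H).toLinearMap)ᗮ := by
            rw [hLo, hann, hJWdef]
        _ = (L.map (hatJ H).toLinearMap ⊔ W.map (hatJ H).toLinearMap)ᗮ :=
            Submodule.inf_orthogonal _ _
        _ = ((L ⊔ W).map (hatJ H).toLinearMap)ᗮ := by rw [Submodule.map_sup]
        _ = ((L ⊔ W)ᗮ).map (hatJ H).toLinearMap := map_hatJ_orthogonal H _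
    have horthcl : (L ⊓ Wω)ᗮ = (L ⊔ W).map (hatJ H).toLinearMap := by
      rw [hinter, map_hatJ_orthogonal, Submodule.orthogonal_orthogonal_eq_closure,
        hclosed.submodule_topologicalClosure_eq]
    rw [horthcl] at step1
    obtain ⟨z, hz, hzh⟩ := step1
    have hzh' : z = h := hatJ_injective H hzh
    subst hzh'
    obtain ⟨l, hl, w, hw, hlw⟩ := Submodule.mem_sup.mp hz
    have hlWω : l ∈ Wω := by
      have : l = z - w := by rw [← hlw]; abel
      rw [this]
      exact Submodule.sub_mem _ (hHW_le_Wω hhHW) (hW_le_Wω hw)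
    have hPl : (P l : Hh H) = z := by
      have : l = z - w := by rw [← hlw]; abel
      rw [this, map_sub, Submodule.coe_sub, hPH z hhHW]
      have : (P w : Hh H) = 0 := by rw [hPW w hw]; rfl
      rw [this, sub_zero]
    exact (hL'mem _).mpr ⟨l, ⟨hl, hlWω⟩, hPl⟩
  -- finite dimensionality of L' and JL'
  haveI hfdL' : FiniteDimensional ℂ ↥L' := Submodule.finiteDimensional_of_le hL'le
  haveI hfdJL' : FiniteDimensional ℂ ↥JL' := Submodule.finiteDimensional_of_le hJL'leHW
  haveI : CompleteSpace ↥JL' := FiniteDimensional.complete ℂ ↥JL'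
  -- H_W = JL' ⊔ L'
  have hL'eq : JL'ᗮ ⊓ HW = L' := by
    apply le_antisymm
    · intro x hx
      exact hkey ⟨hx.2, hx.1⟩
    · exact le_inf hL'leJL'o hL'le
  have hsupHW : JL' ⊔ L' = HW := by
    have := Submodule.sup_orthogonal_inf_of_hasOrthogonalProjection hJL'leHW
    rw [hL'eq] at this
    exact this
  have hdisj : JL' ⊓ L' = ⊥ := by
    apply le_antisymm _ bot_le
    intro x hx
    have : x ∈ L' ⊓ L'ᗮ := ⟨hx.2, hJL'orth hx.1⟩
    rw [Submodule.inf_orthogonal_eq_bot] at this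
    exact this
  have hJrank : Module.finrank ℂ ↥JL' = Module.finrank ℂ ↥L' :=
    (Submodule.equivMapOfInjective (hatJ H).toLinearMap (hatJ_injective H) L').finrank_eq.symm
  have hHWrank : Module.finrank ℂ ↥HW = 2 * Module.finrank ℂ ↥L' := by
    have h1 := Submodule.finrank_sup_add_finrank_inf_eq JL' L'
    rw [hsupHW, hdisj, finrank_bot, add_zero, hJrank] at h1
    omega
  -- the decomposition L ⊓ W^ω = V ⊔ X
  set X := L ⊓ ((W ⊓ Vᗮ) ⊔ HW) with hXdef
  have hV_le_W : V ≤ W := inf_le_right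
  have hd : X ≤ Vᗮ := by
    refine inf_le_right.trans (sup_le inf_le_right (hHW_le_Wo.trans ?_))
    exact Submodule.orthogonal_le hV_le_W
  have hVle : V ≤ L ⊓ Wω := le_inf inf_le_left (hV_le_W.trans hW_le_Wω)
  have hXle : X ≤ L ⊓ Wω :=
    le_inf inf_le_left (inf_le_right.trans (sup_le (inf_le_left.trans hW_le_Wω) hHW_le_Wω))
  have hc : L ⊓ Wω = V ⊔ X := by
    apply le_antisymm _ (sup_le hVle hXle)
    rintro x ⟨hxL, hxω⟩
    have hw : x - (P x : Hh H) ∈ W := hsub x hxω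
    have hWdec : V ⊔ (Vᗮ ⊓ W) = W :=
      Submodule.sup_orthogonal_inf_of_hasOrthogonalProjection hV_le_W
    rw [← hWdec] at hw
    obtain ⟨v, hv, v', hv', hvv⟩ := Submodule.mem_sup.mp hw
    have h4 : v' = x - (P x : Hh H) - v := by rw [← hvv]; abel
    have hx2 : x = v + (v' + (P x : Hh H)) := by rw [h4]; abel
    refine Submodule.mem_sup.mpr ⟨v, hv, v' + (P x : Hh H), ?_, hx2.symm⟩
    refine ⟨?_, Submodule.mem_sup.mpr ⟨v', ⟨hv'.2, hv'.1⟩, (P x : Hh H),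
      Submodule.coe_mem _, rfl⟩⟩
    have h5 : v' + (P x : Hh H) = x - v := by rw [h4]; abel
    rw [h5]
    exact Submodule.sub_mem _ hxL (inf_le_left (b := W) hv)
  -- finite dimensionality of X and of L ⊓ W^ω
  have hXfin : FiniteDimensional ℂ ↥X := by
    set g : ↥X →ₗ[ℂ] ↥HW := P.toLinearMap ∘ₗ X.subtype with hgdef
    apply FiniteDimensional.of_injective g
    rw [← LinearMap.ker_eq_bot]
    apply le_antisymm _ bot_le
    rintro ⟨x, hx⟩ hker
    have hgx : P x = 0 := hker
    have hxLW : x ∈ L ⊓ Wω := hXle hx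
    have hxW : x ∈ W := by
      have := hsub x hxLW.2
      rw [hgx] at this
      simpa using this
    have hxV : x ∈ V := ⟨hxLW.1, hxW⟩
    have hxVo : x ∈ Vᗮ := hd hx
    have : x ∈ V ⊓ Vᗮ := ⟨hxV, hxVo⟩
    rw [Submodule.inf_orthogonal_eq_bot] at this
    simpa using this
  haveI : FiniteDimensional ℂ ↥X := hXfin
  haveI hfdLW : FiniteDimensional ℂ ↥(L ⊓ Wω) := by
    rw [hc]; infer_instance
  -- rank-nullity
  have hker : LinearMap.ker f = V.comap (L ⊓ Wω).subtype := by
    ext x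
    rw [LinearMap.mem_ker, Submodule.mem_comap]
    constructor
    · intro hfx
      have hgx : P (x : Hh H) = 0 := hfx
      have hxW : (x : Hh H) ∈ W := by
        have := hsub (x : Hh H) x.2.2
        rw [hgx] at this
        simpa using this
      exact ⟨x.2.1, hxW⟩
    · intro hxV
      show P (x : Hh H) = 0
      exact hPW _ hxV.2
  have hkerrank : Module.finrank ℂ ↥(LinearMap.ker f) = k := by
    rw [hker, (Submodule.comapSubtypeEquivOfLe hVle).finrank_eq, hk]
  have hrangerank : Module.finrank ℂ ↥(LinearMap.range f) = Module.finrank ℂ ↥L' :=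
    (Submodule.finrank_map_subtype_eq HW (LinearMap.range f)).symm
  have hrn := LinearMap.finrank_range_add_finrank_ker f
  rw [hkerrank, hrangerank] at hrn
  refine ⟨hfdLW, ?_, hc, hd⟩
  omega
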